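/- For an m×n rank-r matrix M with column space U of nonsparsity-number ψ(U) = k, the coherence satisfies μ(U) ≥ m/(k r); equivalently, k ≥ m/(μ(U) r). -/

import Mathlib

/-- For an `r`-dimensional subspace `U ⊆ ℝ^m` (e.g. the column space of a rank-`r`
matrix) with nonsparsity-number `ψ(U) = k`, the coherence
`μ(U) = (m/r)·max_j ‖P_U e_j‖²` satisfies `μ(U) ≥ m/(k r)`. -/
theorem coherence_ge_of_nonsparsity
    {m r k : ℕ} (hr : 1 ≤ r) (U : Submodule ℝ (EuclideanSpace ℝ (Fin m)))
    (hU : Module.finrank ℝ U = r)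
    (hk : sInf {c : ℕ | ∃ x ∈ U, x ≠ 0 ∧
        c = (Finset.univ.filter fun j => x j ≠ 0).card} = k) :
    (m : ℝ) / (k * r) ≤
      (m / r : ℝ) *
        (⨆ j : Fin m,
          ‖(U.orthogonalProjection (EuclideanSpace.single j (1 : ℝ)) :
              EuclideanSpace ℝ (Fin m))‖ ^ 2) := by
  rcases Nat.eq_zero_or_pos m with hm | hm
  · subst hm
    simp
  -- U is nonzero
  have hUne : U ≠ ⊥ := by
    intro h
    rw [h, finrank_bot] at hU
    omega
  obtain ⟨x0, hx0U, hx00⟩ := Submodule.exists_mem_ne_zero_of_ne_bot hUne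
  have hne : {c : ℕ | ∃ x ∈ U, x ≠ 0 ∧
      c = (Finset.univ.filter fun j => x j ≠ 0).card}.Nonempty :=
    ⟨_, x0, hx0U, hx00, rfl⟩
  have hmem := Nat.sInf_mem hne
  rw [hk] at hmem
  obtain ⟨x, hxU, hx0, hkcard⟩ := hmem
  set T : ℝ := ⨆ j : Fin m,
      ‖(U.orthogonalProjection (EuclideanSpace.single j (1 : ℝ)) :
          EuclideanSpace ℝ (Fin m))‖ ^ 2 with hT
  have hbdd : BddAbove (Set.range fun j : Fin m =>
      ‖(U.orthogonalProjection (EuclideanSpace.single j (1 : ℝ)) :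
          EuclideanSpace ℝ (Fin m))‖ ^ 2) := Set.Finite.bddAbove (Set.finite_range _)
  have hTle : ∀ j : Fin m,
      ‖(U.orthogonalProjection (EuclideanSpace.single j (1 : ℝ)) :
          EuclideanSpace ℝ (Fin m))‖ ^ 2 ≤ T := fun j => le_ciSup hbdd j
  have hxnorm : (0:ℝ) < ‖x‖ ^ 2 := pow_pos (norm_pos_iff.mpr hx0) 2
  -- each coordinate squared is bounded
  have key : ∀ j : Fin m, (x j) ^ 2 ≤ ‖x‖ ^ 2 * T := by
    intro j
    have h1 : x j = @inner ℝ _ _ x (EuclideanSpace.single j (1:ℝ)) := by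
      rw [EuclideanSpace.inner_single_right]; simp
    have h2 : @inner ℝ _ _ x (EuclideanSpace.single j (1:ℝ)) =
        @inner ℝ _ _ x ((U.orthogonalProjection (EuclideanSpace.single j (1:ℝ)) :
            EuclideanSpace ℝ (Fin m))) := by
      have h := U.starProjection_inner_eq_zero (EuclideanSpace.single j (1:ℝ)) x hxU
      rw [Submodule.starProjection_apply] at h
      rw [inner_sub_left] at h
      linarith [real_inner_comm x (EuclideanSpace.single j (1:ℝ)),
        real_inner_comm x ((U.orthogonalProjection (EuclideanSpace.single j (1:ℝ)) :
          EuclideanSpace ℝ (Fin m)))]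
    have h3 : |(x j)| ≤ ‖x‖ *
        ‖(U.orthogonalProjection (EuclideanSpace.single j (1:ℝ)) :
            EuclideanSpace ℝ (Fin m))‖ := by
      rw [h1, h2]
      exact (abs_real_inner_le_norm _ _)
    calc (x j)^2 = |x j|^2 := (sq_abs _).symm
      _ ≤ (‖x‖ * ‖(U.orthogonalProjection (EuclideanSpace.single j (1:ℝ)) :
            EuclideanSpace ℝ (Fin m))‖)^2 := by
          apply sq_le_sq' _ h3
          nlinarith [abs_nonneg (x j)]
      _ = ‖x‖^2 * ‖(U.orthogonalProjection (EuclideanSpace.single j (1:ℝ)) :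
            EuclideanSpace ℝ (Fin m))‖^2 := by ring
      _ ≤ ‖x‖^2 * T := by
          apply mul_le_mul_of_nonneg_left (hTle j) (by positivity)
  -- norm as sum over support
  set S : Finset (Fin m) := Finset.univ.filter fun j => x j ≠ 0 with hS
  have hnormsum : ‖x‖ ^ 2 = ∑ j ∈ S, (x j) ^ 2 := by
    have : ‖x‖ ^ 2 = ∑ j : Fin m, (x j) ^ 2 := by
      rw [EuclideanSpace.norm_eq, Real.sq_sqrt (by positivity)]
      simp [sq_abs]
    rw [this]
    symm
    apply Finset.sum_subset (Finset.subset_univ _)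
    intro j _ hj
    simp [hS] at hj
    simp [hj]
  have hsum_le : ‖x‖ ^ 2 ≤ (k : ℝ) * (‖x‖ ^ 2 * T) := by
    calc ‖x‖ ^ 2 = ∑ j ∈ S, (x j) ^ 2 := hnormsum
      _ ≤ ∑ _j ∈ S, ‖x‖ ^ 2 * T := Finset.sum_le_sum fun j _ => key j
      _ = (S.card : ℝ) * (‖x‖ ^ 2 * T) := by rw [Finset.sum_const, nsmul_eq_mul]
      _ = (k : ℝ) * (‖x‖ ^ 2 * T) := by rw [← hkcard]
  have hk0 : 0 < k := by
    rcases Nat.eq_zero_or_pos k with h | h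
    · exfalso
      rw [h] at hkcard
      have : S = ∅ := Finset.card_eq_zero.mp hkcard.symm
      apply hx0
      ext j
      have : j ∉ S := by simp [this]
      simpa [hS] using this
    · exact h
  have hinvk : (1 : ℝ) / k ≤ T := by
    rw [div_le_iff₀ (by exact_mod_cast hk0)]
    have := hsum_le
    have hT2 : ‖x‖ ^ 2 ≤ (k : ℝ) * T * ‖x‖ ^ 2 := by nlinarith
    nlinarith
  have hrw : (m : ℝ) / (k * r) = (m / r : ℝ) * (1 / k) := by
    rw [mul_comm (k:ℝ) r, ← div_div, div_eq_mul_one_div]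
  rw [hrw]
  apply mul_le_mul_of_nonneg_left hinvk (by positivity)
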